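/- Suppose the offspring distribution p has mean m ∈ (0,1), all moments finite, and limsup_n (p_n)^{1/n} < 1. Then there exists a constant c₃ > 0 such that sup_n E[e^{c₃ N_n} | N_n > 0] < ∞, i.e., the limit lim_n E[e^{c₃ N̂_n}] is finite, where N̂_n has the law of N_n conditioned on N_n > 0. -/

import Mathlib

open MeasureTheory Filter Topology

noncomputable def genFun (p : ℕ → ℝ) (s : ℝ) : ℝ := ∑' j, p j * s ^ j

noncomputable def genFunIter (p : ℕ → ℝ) : ℕ → ℝ → ℝ
  | 0, s => s
  | n + 1, s => genFun p (genFunIter p n s)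

namespace Stmt6Aux

/-- the "slope" function `g(s) = (f(s)-1)/(s-1) = ∑ p_j (1 + s + ... + s^{j-1})`. -/
noncomputable def gf (p : ℕ → ℝ) (s : ℝ) : ℝ := ∑' j, p j * ∑ i ∈ Finset.range j, s ^ i

/-- standing hypotheses -/
structure H (p : ℕ → ℝ) (C r s₁ : ℝ) : Prop where
  hp : ∀ j, 0 ≤ p j
  hsum : ∑' j, p j = 1
  hC : 1 ≤ C
  hr0 : 0 ≤ r
  hble : ∀ j, p j ≤ C * r ^ j
  hs₁ : 1 ≤ s₁
  hrs : r * s₁ ^ 2 < 1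

variable {p : ℕ → ℝ} {C r s₁ : ℝ}

lemma H.rs2_nonneg (h : H p C r s₁) : 0 ≤ r * s₁ ^ 2 := by
  have := h.hr0; have := h.hs₁; positivity

lemma master (h : H p C r s₁) :
    Summable (fun j : ℕ => C * (((j : ℝ) + 1) ^ 2 * (r * s₁ ^ 2) ^ j)) := by
  have hx : ‖r * s₁ ^ 2‖ < 1 := by
    rw [Real.norm_eq_abs, abs_of_nonneg h.rs2_nonneg]; exact h.hrs
  have h2 := summable_pow_mul_geometric_of_norm_lt_one (R := ℝ) 2 hx
  have h1 := summable_pow_mul_geometric_of_norm_lt_one (R := ℝ) 1 hx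
  have h0 := summable_pow_mul_geometric_of_norm_lt_one (R := ℝ) 0 hx
  have hs : Summable (fun j : ℕ =>
      ((j : ℝ) ^ 2 * (r * s₁ ^ 2) ^ j + 2 * ((j : ℝ) ^ 1 * (r * s₁ ^ 2) ^ j))
        + (j : ℝ) ^ 0 * (r * s₁ ^ 2) ^ j) := (h2.add (h1.mul_left 2)).add h0
  exact (hs.mul_left C).congr (fun j => by ring)

lemma summable_of_bound (h : H p C r s₁) {f : ℕ → ℝ}
    (hf : ∀ j, ‖f j‖ ≤ C * (((j : ℝ) + 1) ^ 2 * (r * s₁ ^ 2) ^ j)) : Summable f :=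
  Summable.of_norm_bounded (master h) hf

lemma pow_le_s₁ (h : H p C r s₁) {t : ℝ} (ht : t ∈ Set.Icc 0 s₁) {i j : ℕ} (hij : i ≤ j) :
    t ^ i ≤ s₁ ^ j := by
  calc t ^ i ≤ s₁ ^ i := pow_le_pow_left₀ ht.1 ht.2 i
  _ ≤ s₁ ^ j := pow_le_pow_right₀ h.hs₁ hij

lemma key_bound (h : H p C r s₁) {j : ℕ} {x : ℝ} (hx : |x| ≤ ((j:ℝ)+1)^2 * (s₁ ^ 2) ^ j) :
    ‖p j * x‖ ≤ C * (((j : ℝ) + 1) ^ 2 * (r * s₁ ^ 2) ^ j) := by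
  have h1 : 0 ≤ p j := h.hp j
  have h2 : p j ≤ C * r ^ j := h.hble j
  have h3 : (0:ℝ) ≤ r ^ j := pow_nonneg h.hr0 j
  have h4 : (0:ℝ) ≤ (s₁^2) ^ j := pow_nonneg (by nlinarith [h.hs₁] : (0:ℝ) ≤ s₁^2) j
  rw [Real.norm_eq_abs, abs_mul, abs_of_nonneg h1, mul_pow]
  calc p j * |x| ≤ (C * r ^ j) * (((j:ℝ)+1)^2 * (s₁ ^ 2) ^ j) := by
        apply mul_le_mul h2 hx (abs_nonneg x) (by nlinarith [h.hC, h3])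
  _ = C * (((j : ℝ) + 1) ^ 2 * (r ^ j * (s₁ ^ 2) ^ j)) := by ring

lemma sigma_bound (h : H p C r s₁) {t : ℝ} (ht : t ∈ Set.Icc 0 s₁) (j : ℕ) :
    |∑ i ∈ Finset.range j, t ^ i| ≤ ((j:ℝ)+1)^2 * (s₁ ^ 2) ^ j := by
  have h1 : ∀ i ∈ Finset.range j, (0:ℝ) ≤ t ^ i := fun i _ => pow_nonneg ht.1 i
  rw [abs_of_nonneg (Finset.sum_nonneg h1)]
  have h2 : ∀ i ∈ Finset.range j, t ^ i ≤ s₁ ^ j :=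
    fun i hi => pow_le_s₁ h ht (Finset.mem_range.1 hi).le
  calc (∑ i ∈ Finset.range j, t ^ i) ≤ ∑ _i ∈ Finset.range j, s₁ ^ j :=
        Finset.sum_le_sum h2
  _ = (j : ℝ) * s₁ ^ j := by rw [Finset.sum_const, Finset.card_range, nsmul_eq_mul]
  _ ≤ ((j:ℝ)+1)^2 * (s₁ ^ 2) ^ j := by
      have hs : (1:ℝ) ≤ s₁ := h.hs₁
      have h3 : s₁ ^ j ≤ (s₁^2) ^ j := by
        rw [← pow_mul]
        exact pow_le_pow_right₀ hs (by omega)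
      have h4 : (0:ℝ) ≤ s₁ ^ j := by positivity
      nlinarith [sq_nonneg ((j:ℝ)), pow_nonneg (by nlinarith : (0:ℝ) ≤ s₁^2) j]

lemma summable_ps (h : H p C r s₁) {t : ℝ} (ht : t ∈ Set.Icc 0 s₁) :
    Summable (fun j => p j * t ^ j) := by
  refine summable_of_bound h (fun j => key_bound h ?_)
  have h1 : (0:ℝ) ≤ t ^ j := pow_nonneg ht.1 j
  rw [abs_of_nonneg h1]
  have h2 : t ^ j ≤ s₁ ^ j := pow_le_s₁ h ht le_rfl
  have h3 : s₁ ^ j ≤ (s₁^2) ^ j := by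
    rw [← pow_mul]; exact pow_le_pow_right₀ h.hs₁ (by omega)
  have h4 : (1:ℝ) ≤ ((j:ℝ)+1)^2 := by nlinarith [Nat.cast_nonneg (α := ℝ) j]
  nlinarith [pow_nonneg (by nlinarith [h.hs₁] : (0:ℝ) ≤ s₁^2) j,
    pow_nonneg (le_trans zero_le_one h.hs₁) j]

lemma summable_p (h : H p C r s₁) : Summable p := by
  have := summable_ps h (t := 1) ⟨zero_le_one, h.hs₁⟩
  simpa using this

lemma summable_sigma (h : H p C r s₁) {t : ℝ} (ht : t ∈ Set.Icc 0 s₁) :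
    Summable (fun j => p j * ∑ i ∈ Finset.range j, t ^ i) :=
  summable_of_bound h (fun j => key_bound h (sigma_bound h ht j))

/-- the key identity `f(t) - 1 = (t-1) g(t)`. -/
lemma genFun_sub_one (h : H p C r s₁) {t : ℝ} (ht : t ∈ Set.Icc 0 s₁) :
    genFun p t - 1 = (t - 1) * gf p t := by
  have h1 := summable_ps h ht
  have h2 := summable_p h
  unfold genFun gf
  calc (∑' j, p j * t ^ j) - 1 = (∑' j, p j * t ^ j) - ∑' j, p j := by rw [h.hsum]
  _ = ∑' j, (p j * t ^ j - p j) := (Summable.tsum_sub h1 h2).symm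
  _ = ∑' j, (t - 1) * (p j * ∑ i ∈ Finset.range j, t ^ i) := by
      refine tsum_congr fun j => ?_
      have := geom_sum_mul t j
      linear_combination (-(p j)) * this
  _ = (t - 1) * ∑' j, p j * ∑ i ∈ Finset.range j, t ^ i := tsum_mul_left

lemma gf_mono (h : H p C r s₁) {x y : ℝ} (hx : x ∈ Set.Icc 0 s₁) (hy : y ∈ Set.Icc 0 s₁)
    (hxy : x ≤ y) : gf p x ≤ gf p y := by
  refine Summable.tsum_le_tsum (fun j => ?_) (summable_sigma h hx) (summable_sigma h hy)
  refine mul_le_mul_of_nonneg_left (Finset.sum_le_sum fun i _ => ?_) (h.hp j)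
  exact pow_le_pow_left₀ hx.1 hxy i

lemma gf_one (h : H p C r s₁) : gf p 1 = ∑' j, p j * (j : ℝ) := by
  unfold gf
  exact tsum_congr fun j => by simp

lemma gf_nonneg (h : H p C r s₁) {t : ℝ} (ht : t ∈ Set.Icc 0 s₁) : 0 ≤ gf p t := by
  refine tsum_nonneg fun j => mul_nonneg (h.hp j) (Finset.sum_nonneg fun i _ => pow_nonneg ht.1 i)

lemma sigma_lip (h : H p C r s₁) {x y : ℝ} (hx : x ∈ Set.Icc 0 s₁) (hy : y ∈ Set.Icc 0 s₁)
    (j : ℕ) :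
    |(∑ i ∈ Finset.range j, x ^ i) - ∑ i ∈ Finset.range j, y ^ i|
      ≤ (((j:ℝ)+1)^2 * (s₁ ^ 2) ^ j) * |x - y| := by
  have hterm : ∀ i ∈ Finset.range j, |x ^ i - y ^ i| ≤ ((j:ℝ) * (s₁ ^ 2) ^ j) * |x - y| := by
    intro i hi
    have hgeom := geom_sum₂_mul x y i
    have : |x ^ i - y ^ i| = |∑ k ∈ Finset.range i, x ^ k * y ^ (i - 1 - k)| * |x - y| := by
      rw [← abs_mul, hgeom]
    rw [this]
    refine mul_le_mul_of_nonneg_right ?_ (abs_nonneg _)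
    calc |∑ k ∈ Finset.range i, x ^ k * y ^ (i - 1 - k)|
        ≤ ∑ k ∈ Finset.range i, |x ^ k * y ^ (i - 1 - k)| := Finset.abs_sum_le_sum_abs _ _
    _ ≤ ∑ _k ∈ Finset.range i, (s₁ ^ 2) ^ j := by
        refine Finset.sum_le_sum fun k hk => ?_
        have hkj : k ≤ j := by have := Finset.mem_range.1 hk; have := Finset.mem_range.1 hi; omega
        have hij2 : i - 1 - k ≤ j := by have := Finset.mem_range.1 hi; omega
        have b1 : x ^ k ≤ s₁ ^ j := pow_le_s₁ h hx hkj
        have b2 : y ^ (i - 1 - k) ≤ s₁ ^ j := pow_le_s₁ h hy hij2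
        have hb1 : (0:ℝ) ≤ x ^ k := pow_nonneg hx.1 k
        have hb2 : (0:ℝ) ≤ y ^ (i - 1 - k) := pow_nonneg hy.1 _
        rw [abs_mul, abs_of_nonneg hb1, abs_of_nonneg hb2]
        calc x ^ k * y ^ (i - 1 - k) ≤ s₁ ^ j * s₁ ^ j := by
              apply mul_le_mul b1 b2 hb2 (pow_nonneg (le_trans zero_le_one h.hs₁) j)
        _ = (s₁ ^ 2) ^ j := by ring
    _ = (i : ℝ) * (s₁ ^ 2) ^ j := by rw [Finset.sum_const, Finset.card_range, nsmul_eq_mul]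
    _ ≤ (j : ℝ) * (s₁ ^ 2) ^ j := by
        have : (i:ℝ) ≤ (j:ℝ) := Nat.cast_le.2 (Finset.mem_range.1 hi).le
        have h4 : (0:ℝ) ≤ (s₁^2) ^ j := pow_nonneg (by nlinarith [h.hs₁] : (0:ℝ) ≤ s₁^2) j
        nlinarith
  calc |(∑ i ∈ Finset.range j, x ^ i) - ∑ i ∈ Finset.range j, y ^ i|
      = |∑ i ∈ Finset.range j, (x ^ i - y ^ i)| := by rw [Finset.sum_sub_distrib]
  _ ≤ ∑ i ∈ Finset.range j, |x ^ i - y ^ i| := Finset.abs_sum_le_sum_abs _ _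
  _ ≤ ∑ _i ∈ Finset.range j, ((j:ℝ) * (s₁ ^ 2) ^ j) * |x - y| := Finset.sum_le_sum hterm
  _ = (j : ℝ) * (((j:ℝ) * (s₁ ^ 2) ^ j) * |x - y|) := by
      rw [Finset.sum_const, Finset.card_range, nsmul_eq_mul]
  _ ≤ (((j:ℝ)+1)^2 * (s₁ ^ 2) ^ j) * |x - y| := by
      have h4 : (0:ℝ) ≤ (s₁^2) ^ j := pow_nonneg (by nlinarith [h.hs₁] : (0:ℝ) ≤ s₁^2) j
      have h5 : (0:ℝ) ≤ (j:ℝ) := Nat.cast_nonneg j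
      nlinarith [abs_nonneg (x - y), mul_nonneg h4 (abs_nonneg (x-y))]

lemma summable_M (h : H p C r s₁) :
    Summable (fun j => p j * (((j:ℝ)+1)^2 * (s₁ ^ 2) ^ j)) := by
  refine summable_of_bound h (fun j => key_bound h ?_)
  have h4 : (0:ℝ) ≤ (s₁^2) ^ j := pow_nonneg (by nlinarith [h.hs₁] : (0:ℝ) ≤ s₁^2) j
  rw [abs_of_nonneg (by positivity)]

lemma gf_lip (h : H p C r s₁) {x y : ℝ} (hx : x ∈ Set.Icc 0 s₁) (hy : y ∈ Set.Icc 0 s₁) :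
    |gf p x - gf p y| ≤ (∑' j, p j * (((j:ℝ)+1)^2 * (s₁ ^ 2) ^ j)) * |x - y| := by
  have hsx := summable_sigma h hx
  have hsy := summable_sigma h hy
  have hdiff : gf p x - gf p y
      = ∑' j, p j * ((∑ i ∈ Finset.range j, x ^ i) - ∑ i ∈ Finset.range j, y ^ i) := by
    rw [gf, gf, ← Summable.tsum_sub hsx hsy]
    exact tsum_congr fun j => by ring
  have hb : ∀ j, ‖p j * ((∑ i ∈ Finset.range j, x ^ i) - ∑ i ∈ Finset.range j, y ^ i)‖
      ≤ (p j * (((j:ℝ)+1)^2 * (s₁ ^ 2) ^ j)) * |x - y| := by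
    intro j
    rw [Real.norm_eq_abs, abs_mul, abs_of_nonneg (h.hp j), mul_assoc]
    exact mul_le_mul_of_nonneg_left (sigma_lip h hx hy j) (h.hp j)
  have hsum2 : Summable fun j => (p j * (((j:ℝ)+1)^2 * (s₁ ^ 2) ^ j)) * |x - y| :=
    (summable_M h).mul_right _
  have hsumnorm : Summable fun j =>
      ‖p j * ((∑ i ∈ Finset.range j, x ^ i) - ∑ i ∈ Finset.range j, y ^ i)‖ :=
    Summable.of_nonneg_of_le (fun j => norm_nonneg _) hb hsum2
  rw [hdiff]
  calc |∑' j, p j * ((∑ i ∈ Finset.range j, x ^ i) - ∑ i ∈ Finset.range j, y ^ i)|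
      ≤ ∑' j, ‖p j * ((∑ i ∈ Finset.range j, x ^ i) - ∑ i ∈ Finset.range j, y ^ i)‖ :=
        norm_tsum_le_tsum_norm hsumnorm
  _ ≤ ∑' j, (p j * (((j:ℝ)+1)^2 * (s₁ ^ 2) ^ j)) * |x - y| :=
        Summable.tsum_le_tsum hb hsumnorm hsum2
  _ = (∑' j, p j * (((j:ℝ)+1)^2 * (s₁ ^ 2) ^ j)) * |x - y| := tsum_mul_right

end Stmt6Aux

set_option maxHeartbeats 2000000 in
theorem stmt6 (p : ℕ → ℝ) (m : ℝ)
    (hp_nonneg : ∀ j, 0 ≤ p j) (hp_sum : ∑' j, p j = 1)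
    (hm : m = ∑' j : ℕ, (j : ℝ) * p j)
    (hm_pos : 0 < m) (hm_lt : m < 1)
    (hmom : ∀ r : ℕ, Summable fun j : ℕ => (j : ℝ) ^ r * p j)
    (hlimsup : Filter.limsup (fun n : ℕ => p n ^ ((n : ℝ)⁻¹)) atTop < 1) :
    ∃ c₃ > (0 : ℝ),
      BddAbove (Set.range fun n : ℕ =>
        1 + (genFunIter p n (Real.exp c₃) - 1) / (1 - genFunIter p n 0)) ∧
      ∃ L : ℝ, Tendsto (fun n : ℕ =>
        1 + (genFunIter p n (Real.exp c₃) - 1) / (1 - genFunIter p n 0)) atTop (𝓝 L) := by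
  classical
  -- Part A : geometric bound on `p`
  have hsp : Summable p := by
    by_contra hns
    rw [tsum_eq_zero_of_not_summable hns] at hp_sum; norm_num at hp_sum
  have hple : ∀ n, p n ≤ 1 := by
    intro n
    have := Summable.le_tsum hsp n (fun j _ => hp_nonneg j)
    rwa [hp_sum] at this
  set Lc := Filter.limsup (fun n : ℕ => p n ^ ((n : ℝ)⁻¹)) atTop with hLc
  set b : ℝ := max (1/2) ((Lc + 1)/2) with hbdef
  have hb0 : (0:ℝ) < b := lt_of_lt_of_le (by norm_num) (le_max_left _ _)
  have hb1 : b < 1 := max_lt (by norm_num) (by rw [hLc]; linarith)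
  have hLb : Lc < b := lt_of_lt_of_le (by rw [hLc]; linarith) (le_max_right _ _)
  have hbdd : Filter.IsBoundedUnder (· ≤ ·) atTop (fun n : ℕ => p n ^ ((n : ℝ)⁻¹)) :=
    Filter.isBoundedUnder_of ⟨1, fun n =>
      Real.rpow_le_one (hp_nonneg n) (hple n) (by positivity)⟩
  have hev : ∀ᶠ n in atTop, p n ^ ((n : ℝ)⁻¹) < b :=
    Filter.eventually_lt_of_limsup_lt hLb hbdd
  obtain ⟨N, hN⟩ := Filter.eventually_atTop.1 hev
  have hgeo : ∀ n, max N 1 ≤ n → p n ≤ b ^ n := by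
    intro n hn
    have hn1 : n ≠ 0 := by omega
    have h1 : p n ^ ((n : ℝ)⁻¹) < b := hN n (le_trans (le_max_left _ _) hn)
    have h2 : (p n ^ ((n : ℝ)⁻¹)) ^ n < b ^ n :=
      pow_lt_pow_left₀ h1 (Real.rpow_nonneg (hp_nonneg n) _) hn1
    have h3 : (p n ^ ((n : ℝ)⁻¹)) ^ n = p n := by
      rw [← Real.rpow_natCast (p n ^ ((n : ℝ)⁻¹)) n, ← Real.rpow_mul (hp_nonneg n),
        inv_mul_cancel₀ (by exact_mod_cast hn1 : ((n:ℝ) ≠ 0)), Real.rpow_one]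
    rw [h3] at h2; exact h2.le
  set C : ℝ := 1 + ∑ n ∈ Finset.range (max N 1), p n / b ^ n with hCdef
  have hsum0 : 0 ≤ ∑ n ∈ Finset.range (max N 1), p n / b ^ n :=
    Finset.sum_nonneg fun n _ => div_nonneg (hp_nonneg n) (by positivity)
  have hCge : 1 ≤ C := by rw [hCdef]; linarith
  have hble : ∀ j, p j ≤ C * b ^ j := by
    intro j
    by_cases hj : j < max N 1
    · have h1 : p j / b ^ j ≤ ∑ n ∈ Finset.range (max N 1), p n / b ^ n :=
        Finset.single_le_sum (f := fun n => p n / b ^ n)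
          (fun n _ => div_nonneg (hp_nonneg n) (by positivity)) (Finset.mem_range.2 hj)
      have h2 : p j / b ^ j ≤ C := by rw [hCdef]; linarith
      have h3 : (0:ℝ) < b ^ j := by positivity
      calc p j = (p j / b ^ j) * b ^ j := by field_simp
      _ ≤ C * b ^ j := mul_le_mul_of_nonneg_right h2 h3.le
    · calc p j ≤ b ^ j := hgeo j (by omega)
      _ ≤ C * b ^ j := by nlinarith [pow_nonneg hb0.le j]
  set s₁ : ℝ := (1 + Real.sqrt b⁻¹) / 2 with hs₁def
  have hbinv : 1 < b⁻¹ := by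
    have h1 : b * b⁻¹ = 1 := mul_inv_cancel₀ hb0.ne'
    nlinarith
  have hsq : 1 < Real.sqrt b⁻¹ := by
    rw [show (1:ℝ) = Real.sqrt 1 by simp]
    exact Real.sqrt_lt_sqrt (by norm_num) hbinv
  have hs₁1 : 1 < s₁ := by rw [hs₁def]; linarith
  have hs₁sq : s₁ ^ 2 < b⁻¹ := by
    have h0 : (0:ℝ) ≤ s₁ := by linarith
    have h1 : s₁ < Real.sqrt b⁻¹ := by rw [hs₁def]; linarith
    have h2 := Real.sq_sqrt (by positivity : (0:ℝ) ≤ b⁻¹)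
    nlinarith
  have hrs : b * s₁ ^ 2 < 1 := by
    have h1 : b * s₁ ^ 2 < b * b⁻¹ := mul_lt_mul_of_pos_left hs₁sq hb0
    rwa [mul_inv_cancel₀ hb0.ne'] at h1
  have H : Stmt6Aux.H p C b s₁ := ⟨hp_nonneg, hp_sum, hCge, hb0.le, hble, hs₁1.le, hrs⟩
  -- Part B : the slope function and constants
  set g : ℝ → ℝ := Stmt6Aux.gf p with hgdef
  have hone_mem : (1:ℝ) ∈ Set.Icc 0 s₁ := ⟨zero_le_one, hs₁1.le⟩
  have hg1 : g 1 = m := by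
    rw [hgdef, Stmt6Aux.gf_one H, hm]
    exact tsum_congr fun j => mul_comm _ _
  obtain ⟨j₀, hj₀1, hj₀pos⟩ : ∃ j₀ : ℕ, 1 ≤ j₀ ∧ 0 < p j₀ := by
    by_contra hno
    push_neg at hno
    have hz : ∀ j : ℕ, (j : ℝ) * p j = 0 := by
      intro j
      rcases Nat.eq_zero_or_pos j with hj | hj
      · simp [hj]
      · have := hno j hj
        have := hp_nonneg j
        have : p j = 0 := le_antisymm ‹p j ≤ 0› ‹0 ≤ p j›
        simp [this]
    rw [hm, tsum_congr hz, tsum_zero] at hm_pos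
    exact lt_irrefl 0 hm_pos
  have hgpos : ∀ t ∈ Set.Icc (0:ℝ) s₁, p j₀ ≤ g t := by
    intro t ht
    have h1 : p j₀ * ∑ i ∈ Finset.range j₀, t ^ i ≤ g t :=
      Summable.le_tsum (Stmt6Aux.summable_sigma H ht) j₀ fun j _ =>
        mul_nonneg (hp_nonneg j) (Finset.sum_nonneg fun i _ => pow_nonneg ht.1 i)
    have h2 : (1:ℝ) ≤ ∑ i ∈ Finset.range j₀, t ^ i := by
      have h3 := Finset.single_le_sum (f := fun i => t ^ i)
        (fun i _ => pow_nonneg ht.1 i) (Finset.mem_range.2 (by omega : 0 < j₀))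
      simpa using h3
    nlinarith
  set M : ℝ := ∑' j, p j * (((j:ℝ)+1)^2 * (s₁ ^ 2) ^ j) with hMdef
  have hM0 : 0 ≤ M :=
    tsum_nonneg fun j => mul_nonneg (hp_nonneg j)
      (mul_nonneg (by positivity) (pow_nonneg (sq_nonneg s₁) j))
  set M1 : ℝ := M + 1 with hM1def
  have hM1 : 0 < M1 := by rw [hM1def]; linarith
  have hlip : ∀ x ∈ Set.Icc (0:ℝ) s₁, ∀ y ∈ Set.Icc (0:ℝ) s₁,
      |g x - g y| ≤ M1 * |x - y| := by
    intro x hx y hy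
    calc |g x - g y| ≤ M * |x - y| := Stmt6Aux.gf_lip H hx hy
    _ ≤ M1 * |x - y| := mul_le_mul_of_nonneg_right (by rw [hM1def]; linarith) (abs_nonneg _)
  set m' : ℝ := (1 + m)/2 with hm'def
  have hm'0 : 0 < m' := by rw [hm'def]; linarith
  have hm'1 : m' < 1 := by rw [hm'def]; linarith
  have hmm' : m < m' := by rw [hm'def]; linarith
  set s₀ : ℝ := min s₁ (1 + (1 - m)/(2 * M1)) with hs₀def
  have hs₀1 : 1 < s₀ := by
    rw [hs₀def]
    have hq : 0 < (1 - m)/(2 * M1) := div_pos (by linarith) (by linarith)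
    exact lt_min hs₁1 (by linarith)
  have hs₀s₁ : s₀ ≤ s₁ := min_le_left _ _
  have hs₀mem : s₀ ∈ Set.Icc (0:ℝ) s₁ := ⟨by linarith, hs₀s₁⟩
  clear_value Lc b C s₁ M M1 m' s₀
  have hgs₀ : g s₀ ≤ m' := by
    have h1 : |g s₀ - g 1| ≤ M1 * |s₀ - 1| := hlip _ hs₀mem _ hone_mem
    have h2 : |s₀ - 1| = s₀ - 1 := abs_of_nonneg (by linarith)
    have h3 : s₀ - 1 ≤ (1 - m)/(2 * M1) := by
      have h4 := min_le_right s₁ (1 + (1 - m)/(2 * M1))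
      rw [hs₀def]; linarith
    have h5 : M1 * ((1 - m)/(2 * M1)) = (1 - m)/2 := by field_simp
    have h6 := abs_le.1 h1
    have h7 : M1 * (s₀ - 1) ≤ M1 * ((1 - m)/(2 * M1)) :=
      mul_le_mul_of_nonneg_left h3 hM1.le
    rw [hg1, h2] at h6
    have h8 : g s₀ - m ≤ (1 - m)/2 := by linarith [h6.2]
    rw [hm'def]; linarith
  -- Part C : the iterates
  have hc3pos : (0:ℝ) < Real.log s₀ := Real.log_pos hs₀1
  have hexp : Real.exp (Real.log s₀) = s₀ := Real.exp_log (by linarith)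
  set u : ℕ → ℝ := fun n => genFunIter p n s₀ - 1 with hudef
  set v : ℕ → ℝ := fun n => 1 - genFunIter p n 0 with hvdef
  have hu_succ : ∀ n, 0 ≤ u n → 1 + u n ∈ Set.Icc (0:ℝ) s₁ →
      u (n+1) = u n * g (1 + u n) := by
    intro n hu0 humem
    have h1 : genFunIter p (n+1) s₀ = genFun p (1 + u n) := by
      show genFun p (genFunIter p n s₀) = _
      congr 1
      simp only [hudef]; ring
    show genFunIter p (n+1) s₀ - 1 = _
    rw [h1, Stmt6Aux.genFun_sub_one H humem, ← hgdef]
    ring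
  have hv_succ : ∀ n, 1 - v n ∈ Set.Icc (0:ℝ) s₁ →
      v (n+1) = v n * g (1 - v n) := by
    intro n hvmem
    have h1 : genFunIter p (n+1) 0 = genFun p (1 - v n) := by
      show genFun p (genFunIter p n 0) = _
      congr 1
      simp only [hvdef]; ring
    show 1 - genFunIter p (n+1) 0 = _
    rw [h1]
    have h2 := Stmt6Aux.genFun_sub_one H hvmem
    rw [← hgdef] at h2
    linarith [h2]
  have hu0eq : u 0 = s₀ - 1 := by simp [hudef, genFunIter]
  have hv0eq : v 0 = 1 := by simp [hvdef, genFunIter]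
  clear_value u v
  have key : ∀ n : ℕ, (0 ≤ u n ∧ u n ≤ (s₀ - 1) * m' ^ n) ∧ (0 < v n ∧ v n ≤ m ^ n) := by
    intro n
    induction n with
    | zero =>
      rw [hu0eq, hv0eq]
      refine ⟨⟨by linarith, by simp⟩, by norm_num, by simp⟩
    | succ n ih =>
      obtain ⟨⟨hu0, hu1⟩, hv0, hv1⟩ := ih
      have hm'n : m' ^ n ≤ 1 := pow_le_one₀ hm'0.le hm'1.le
      have hmn1 : m ^ n ≤ 1 := pow_le_one₀ hm_pos.le hm_lt.le
      have hm'n0 : (0:ℝ) ≤ m' ^ n := pow_nonneg hm'0.le n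
      have hmn0 : (0:ℝ) ≤ m ^ n := pow_nonneg hm_pos.le n
      have husb : 1 + u n ≤ s₀ := by
        have h9 : (s₀ - 1) * m' ^ n ≤ (s₀ - 1) * 1 :=
          mul_le_mul_of_nonneg_left hm'n (by linarith only [hs₀1])
        linarith only [hu1, h9]
      have humem : (1 + u n) ∈ Set.Icc (0:ℝ) s₁ :=
        ⟨by linarith only [hu0], by linarith only [husb, hs₀s₁]⟩
      have hvle1 : v n ≤ 1 := le_trans hv1 hmn1
      have hvmem : (1 - v n) ∈ Set.Icc (0:ℝ) s₁ :=
        ⟨by linarith only [hvle1], by linarith only [hv0, hs₁1]⟩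
      have hgu_le : g (1 + u n) ≤ m' := le_trans (Stmt6Aux.gf_mono H humem hs₀mem husb) hgs₀
      have hgu_0 : 0 ≤ g (1 + u n) := le_trans hj₀pos.le (hgpos _ humem)
      have hgv_le : g (1 - v n) ≤ m := by
        have h1 := Stmt6Aux.gf_mono H hvmem hone_mem (by linarith : 1 - v n ≤ 1)
        calc g (1 - v n) = Stmt6Aux.gf p (1 - v n) := by rw [hgdef]
        _ ≤ Stmt6Aux.gf p 1 := h1
        _ = g 1 := by rw [hgdef]
        _ = m := hg1
      have hgv_0 : 0 < g (1 - v n) := lt_of_lt_of_le hj₀pos (hgpos _ hvmem)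
      refine ⟨⟨?_, ?_⟩, ?_, ?_⟩
      · rw [hu_succ n hu0 humem]; exact mul_nonneg hu0 hgu_0
      · rw [hu_succ n hu0 humem, pow_succ]
        calc u n * g (1 + u n) ≤ ((s₀ - 1) * m' ^ n) * m' :=
              mul_le_mul hu1 hgu_le hgu_0 (mul_nonneg (by linarith only [hs₀1]) hm'n0)
        _ = (s₀ - 1) * (m' ^ n * m') := by ring
      · rw [hv_succ n hvmem]; exact mul_pos hv0 hgv_0
      · rw [hv_succ n hvmem, pow_succ]
        exact mul_le_mul hv1 hgv_le hgv_0.le hmn0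
  -- Part D : the sequence and its convergence
  set a : ℕ → ℝ := fun n => 1 + u n / v n with hadef
  have hseq : ∀ n : ℕ, 1 + (genFunIter p n (Real.exp (Real.log s₀)) - 1)
      / (1 - genFunIter p n 0) = a n := by
    intro n
    simp only [hadef, hudef, hvdef, hexp]
  set θ : ℝ := max m m' with hθdef
  have hθ0 : 0 < θ := lt_of_lt_of_le hm_pos (le_max_left _ _)
  have hθ1 : θ < 1 := max_lt hm_lt hm'1
  set K : ℝ := M1 * s₀ / p j₀ with hKdef
  have hK0 : 0 ≤ K := by
    rw [hKdef]
    exact div_nonneg (mul_nonneg hM1.le (by linarith only [hs₀1])) hj₀pos.le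
  have hstep : ∀ n, a (n+1) ≤ a n * Real.exp (K * θ ^ n) ∧ a n ≤ a (n+1) := by
    intro n
    obtain ⟨⟨hu0, hu1⟩, hv0, hv1⟩ := key n
    have hm'n : m' ^ n ≤ 1 := pow_le_one₀ hm'0.le hm'1.le
    have hmn1 : m ^ n ≤ 1 := pow_le_one₀ hm_pos.le hm_lt.le
    have hm'n0 : (0:ℝ) ≤ m' ^ n := pow_nonneg hm'0.le n
    have hmn0 : (0:ℝ) ≤ m ^ n := pow_nonneg hm_pos.le n
    have husb : 1 + u n ≤ s₀ := by
      have h9 : (s₀ - 1) * m' ^ n ≤ (s₀ - 1) * 1 :=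
        mul_le_mul_of_nonneg_left hm'n (by linarith only [hs₀1])
      linarith only [hu1, h9]
    have humem : (1 + u n) ∈ Set.Icc (0:ℝ) s₁ :=
      ⟨by linarith only [hu0], by linarith only [husb, hs₀s₁]⟩
    have hvle1 : v n ≤ 1 := le_trans hv1 hmn1
    have hvmem : (1 - v n) ∈ Set.Icc (0:ℝ) s₁ :=
      ⟨by linarith only [hvle1], by linarith only [hv0, hs₁1]⟩
    have hgu_0 : p j₀ ≤ g (1 + u n) := hgpos _ humem
    have hgv_0 : p j₀ ≤ g (1 - v n) := hgpos _ hvmem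
    have hgv_pos : 0 < g (1 - v n) := lt_of_lt_of_le hj₀pos hgv_0
    have hidu : u (n+1) = u n * g (1 + u n) := hu_succ n hu0 humem
    have hidv : v (n+1) = v n * g (1 - v n) := hv_succ n hvmem
    have hguv : g (1 + u n) ≤ g (1 - v n) + M1 * (u n + v n) := by
      have h1 := hlip _ humem _ hvmem
      have h2 : (1 + u n) - (1 - v n) = u n + v n := by ring
      rw [h2, abs_of_nonneg (by linarith only [hu0, hv0] : (0:ℝ) ≤ u n + v n)] at h1
      linarith only [(abs_le.1 h1).2]
    have hgle : g (1 - v n) ≤ g (1 + u n) := by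
      have h1 := Stmt6Aux.gf_mono H hvmem humem (by linarith only [hu0, hv0])
      calc g (1 - v n) = Stmt6Aux.gf p (1 - v n) := by rw [hgdef]
      _ ≤ Stmt6Aux.gf p (1 + u n) := h1
      _ = g (1 + u n) := by rw [hgdef]
    constructor
    · -- quantitative step bound
      have hθm' : m' ^ n ≤ θ ^ n := pow_le_pow_left₀ hm'0.le (le_max_right m m') n
      have hθm : m ^ n ≤ θ ^ n := pow_le_pow_left₀ hm_pos.le (le_max_left m m') n
      have hu1' : u n ≤ (s₀ - 1) * θ ^ n := by
        have h9 : (s₀ - 1) * m' ^ n ≤ (s₀ - 1) * θ ^ n :=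
          mul_le_mul_of_nonneg_left hθm' (by linarith only [hs₀1])
        linarith only [hu1, h9]
      have hv1' : v n ≤ θ ^ n := le_trans hv1 hθm
      have hsum : u n + v n ≤ s₀ * θ ^ n := by linarith only [hu1', hv1']
      have hDθ : M1 * (u n + v n) / p j₀ ≤ K * θ ^ n := by
        have h9 : M1 * (u n + v n) ≤ M1 * (s₀ * θ ^ n) :=
          mul_le_mul_of_nonneg_left hsum hM1.le
        calc M1 * (u n + v n) / p j₀ ≤ M1 * (s₀ * θ ^ n) / p j₀ :=
              (div_le_div_iff_of_pos_right hj₀pos).2 h9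
        _ = K * θ ^ n := by rw [hKdef]; ring
      have hDg : M1 * (u n + v n) ≤ (M1 * (u n + v n) / p j₀) * g (1 - v n) := by
        rw [div_mul_eq_mul_div, le_div_iff₀ hj₀pos]
        exact mul_le_mul_of_nonneg_left hgv_0
          (mul_nonneg hM1.le (by linarith only [hu0, hv0]))
      have hR : u (n+1) / v (n+1) ≤ (u n / v n) * (1 + M1 * (u n + v n) / p j₀) := by
        rw [hidu, hidv, div_le_iff₀ (mul_pos hv0 hgv_pos)]
        have he : u n / v n * (1 + M1 * (u n + v n) / p j₀) * (v n * g (1 - v n))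
            = u n * ((1 + M1 * (u n + v n) / p j₀) * g (1 - v n)) := by
          field_simp
        rw [he]
        apply mul_le_mul_of_nonneg_left _ hu0
        linarith only [hguv, hDg]
      have hDpos : 0 ≤ M1 * (u n + v n) / p j₀ :=
        div_nonneg (mul_nonneg hM1.le (by linarith only [hu0, hv0])) hj₀pos.le
      have hR0 : 0 ≤ u n / v n := div_nonneg hu0 hv0.le
      have h1 : a (n+1) ≤ a n * (1 + M1 * (u n + v n) / p j₀) := by
        simp only [hadef]
        linarith only [hR, hDpos, hR0, mul_nonneg hR0 hDpos]
      have h2 : 1 + M1 * (u n + v n) / p j₀ ≤ Real.exp (K * θ ^ n) := by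
        have h3 := Real.add_one_le_exp (M1 * (u n + v n) / p j₀)
        have h4 : Real.exp (M1 * (u n + v n) / p j₀) ≤ Real.exp (K * θ ^ n) :=
          Real.exp_le_exp.2 hDθ
        linarith only [h3, h4]
      have ha0 : 0 ≤ a n := by
        simp only [hadef]; linarith only [hR0]
      calc a (n+1) ≤ a n * (1 + M1 * (u n + v n) / p j₀) := h1
      _ ≤ a n * Real.exp (K * θ ^ n) := mul_le_mul_of_nonneg_left h2 ha0
    · -- monotonicity
      have hR : u n / v n ≤ u (n+1) / v (n+1) := by
        rw [hidu, hidv, div_le_div_iff₀ hv0 (mul_pos hv0 hgv_pos)]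
        have h1 := mul_le_mul_of_nonneg_left hgle (mul_nonneg hu0 hv0.le)
        linarith only [h1]
      simp only [hadef]
      linarith only [hR]
  have hmono : Monotone a := monotone_nat_of_le_succ fun n => (hstep n).2
  have hboundsum : ∀ n, a n ≤ a 0 * Real.exp (K * ∑ k ∈ Finset.range n, θ ^ k) := by
    intro n
    induction n with
    | zero => simp
    | succ n ih =>
      have h1 := (hstep n).1
      have h2 : a n * Real.exp (K * θ ^ n)
          ≤ (a 0 * Real.exp (K * ∑ k ∈ Finset.range n, θ ^ k)) * Real.exp (K * θ ^ n) :=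
        mul_le_mul_of_nonneg_right ih (Real.exp_pos _).le
      calc a (n+1) ≤ a n * Real.exp (K * θ ^ n) := h1
      _ ≤ (a 0 * Real.exp (K * ∑ k ∈ Finset.range n, θ ^ k)) * Real.exp (K * θ ^ n) := h2
      _ = a 0 * Real.exp (K * ∑ k ∈ Finset.range (n+1), θ ^ k) := by
          rw [Finset.sum_range_succ, mul_add, Real.exp_add]; ring
  have ha0pos : 0 ≤ a 0 := by
    obtain ⟨⟨hu0, _⟩, hv0, _⟩ := key 0
    have h1 : 0 ≤ u 0 / v 0 := div_nonneg hu0 hv0.le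
    simp only [hadef]
    linarith only [h1]
  have hgeoms : ∀ n : ℕ, ∑ k ∈ Finset.range n, θ ^ k ≤ 1 / (1 - θ) := by
    intro n
    rw [geom_sum_eq (by linarith only [hθ1] : θ ≠ 1)]
    have h1 : (θ ^ n - 1)/(θ - 1) = (1 - θ ^ n)/(1 - θ) := by
      rw [div_eq_div_iff (by linarith only [hθ1]) (by linarith only [hθ1])]
      ring
    rw [h1]
    exact div_le_div₀ zero_le_one
      (by linarith only [pow_nonneg hθ0.le n] : 1 - θ ^ n ≤ 1)
      (by linarith only [hθ1]) le_rfl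
  have hBnd : ∀ n, a n ≤ a 0 * Real.exp (K * (1/(1-θ))) := by
    intro n
    calc a n ≤ a 0 * Real.exp (K * ∑ k ∈ Finset.range n, θ ^ k) := hboundsum n
    _ ≤ a 0 * Real.exp (K * (1/(1-θ))) := by
        apply mul_le_mul_of_nonneg_left _ ha0pos
        exact Real.exp_le_exp.2 (mul_le_mul_of_nonneg_left (hgeoms n) hK0)
  have hfeq : (fun n : ℕ => 1 + (genFunIter p n (Real.exp (Real.log s₀)) - 1)
      / (1 - genFunIter p n 0)) = a := funext hseq
  have hbdd2 : BddAbove (Set.range a) :=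
    ⟨a 0 * Real.exp (K * (1/(1-θ))), by rintro x ⟨n, rfl⟩; exact hBnd n⟩
  refine ⟨Real.log s₀, hc3pos, ?_, ?_⟩
  · rw [hfeq]
    exact hbdd2
  · rw [hfeq]
    exact ⟨⨆ n, a n, tendsto_atTop_ciSup hmono hbdd2⟩
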